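/- Let A be a C*-algebra and I'' an ideal of A. Then the map I ↦ I ∩ I'' is a bijection from the set of prime ideals I of A with I'' ⊄ I onto the set of prime ideals of the C*-algebra I''. Its inverse sends a prime ideal P of I'' to {a ∈ A : ab ∈ P for all b ∈ I''}. -/

import Mathlib

/-- `I` is a closed two-sided ideal of the subset `R` (a sub-C*-algebra or ideal)
of the ambient topological non-unital ring `B`. -/
def IsClosedIdealIn {B : Type*} [NonUnitalRing B] [TopologicalSpace B]
    (R : Set B) (I : Set B) : Prop :=
  I ⊆ R ∧ (0 : B) ∈ I ∧ (∀ a ∈ I, ∀ b ∈ I, a + b ∈ I) ∧ (∀ a ∈ I, -a ∈ I) ∧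
    (∀ r ∈ R, ∀ a ∈ I, r * a ∈ I ∧ a * r ∈ I) ∧ IsClosed I

/-- `I` is a prime (closed two-sided) ideal of `R ⊆ B`: `I ≠ R` and whenever
`I₁ ∩ I₂ ⊆ I` for closed ideals `I₁, I₂` of `R`, one has `I₁ ⊆ I` or `I₂ ⊆ I`. -/
def IsPrimeIdealIn {B : Type*} [NonUnitalRing B] [TopologicalSpace B]
    (R : Set B) (I : Set B) : Prop :=
  IsClosedIdealIn R I ∧ I ≠ R ∧
    ∀ I₁ I₂ : Set B, IsClosedIdealIn R I₁ → IsClosedIdealIn R I₂ →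
      I₁ ∩ I₂ ⊆ I → I₁ ⊆ I ∨ I₂ ⊆ I


open Filter Topology

section Aux

variable {A : Type*} [NonUnitalCStarAlgebra A]

/-- The approximating functions `t ↦ min ((n+1)|t|) 1`. -/
noncomputable def apxf (n : ℕ) : ℝ → ℝ := fun t => min ((n + 1 : ℝ) * |t|) 1

lemma apxf_cont (n : ℕ) : Continuous (apxf n) :=
  (continuous_const.mul continuous_abs).min continuous_const

lemma apxf_zero (n : ℕ) : apxf n 0 = 0 := by simp [apxf]

lemma apxf_nonneg (n : ℕ) (t : ℝ) : 0 ≤ apxf n t :=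
  le_min (by positivity) zero_le_one

lemma apxf_le_one (n : ℕ) (t : ℝ) : apxf n t ≤ 1 := min_le_right _ _

lemma apxf_bound (n : ℕ) (t : ℝ) :
    |t * (1 - apxf n t) ^ 2| ≤ 1 / ((n : ℝ) + 1) := by
  rcases le_or_gt 1 ((n + 1 : ℝ) * |t|) with h | h
  · have h1 : apxf n t = 1 := min_eq_right h
    rw [h1]
    simp only [sub_self]
    rw [abs_mul]
    simp only [ne_eq, OfNat.ofNat_ne_zero, not_false_eq_true, zero_pow, abs_zero, mul_zero]
    positivity
  · have hle : |t| ≤ 1 / ((n : ℝ) + 1) := by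
      rw [le_div_iff₀ (by positivity)]
      nlinarith [abs_nonneg t]
    have hf0 : 0 ≤ 1 - apxf n t := by have := apxf_le_one n t; linarith
    have hf1 : (1 - apxf n t) ^ 2 ≤ 1 := by
      nlinarith [apxf_nonneg n t, apxf_le_one n t]
    calc |t * (1 - apxf n t) ^ 2| = |t| * (1 - apxf n t) ^ 2 := by
          rw [abs_mul, abs_of_nonneg (sq_nonneg (1 - apxf n t))]
      _ ≤ |t| * 1 := by nlinarith [abs_nonneg t]
      _ ≤ 1 / ((n : ℝ) + 1) := by linarith

lemma approx_right (a : A) :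
    Tendsto (fun n : ℕ => a * cfcₙ (apxf n) (star a * a)) atTop (𝓝 a) := by
  have hb : IsSelfAdjoint (star a * a) := IsSelfAdjoint.star_mul_self a
  have key : ∀ n : ℕ, ‖a * cfcₙ (apxf n) (star a * a) - a‖
      ≤ Real.sqrt (1 / ((n : ℝ) + 1)) := by
    intro n
    set b := star a * a with hbdef
    set u := cfcₙ (apxf n) b with hudef
    have hu_sa : IsSelfAdjoint u := cfcₙ_predicate (apxf n) b
    have hcont : ContinuousOn (apxf n) (quasispectrum ℝ b) := (apxf_cont n).continuousOn
    have h0 : apxf n 0 = 0 := apxf_zero n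
    -- the key algebraic identity
    have key1 : star (a * u - a) * (a * u - a) = u * b * u - u * b - b * u + b := by
      rw [star_sub, star_mul, hu_sa.star_eq, hbdef]
      noncomm_ring
    -- express as cfcₙ of a single function
    have hid : ContinuousOn (fun t : ℝ => t) (quasispectrum ℝ b) := continuous_id.continuousOn
    have e1 : cfcₙ (fun t => apxf n t * t) b = u * cfcₙ (fun t : ℝ => t) b :=
      cfcₙ_mul _ _ b hcont h0 hid rfl
    have e2 : cfcₙ (fun t => t * apxf n t) b = cfcₙ (fun t : ℝ => t) b * u :=
      cfcₙ_mul _ _ b hid rfl hcont h0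
    have e3 : cfcₙ (fun t => apxf n t * t * apxf n t) b
        = cfcₙ (fun t => apxf n t * t) b * u :=
      cfcₙ_mul _ _ b (hcont.mul hid) (by simp [apxf_zero]) hcont h0
    have e6 : cfcₙ (fun t => apxf n t * t * apxf n t - apxf n t * t) b
        = cfcₙ (fun t => apxf n t * t * apxf n t) b - cfcₙ (fun t => apxf n t * t) b :=
      cfcₙ_sub _ _ b ((hcont.mul hid).mul hcont) (by simp [apxf_zero]) (hcont.mul hid)
        (by simp [apxf_zero])
    have e5 : cfcₙ (fun t => apxf n t * t * apxf n t - apxf n t * t - t * apxf n t) b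
        = cfcₙ (fun t => apxf n t * t * apxf n t - apxf n t * t) b
          - cfcₙ (fun t => t * apxf n t) b :=
      cfcₙ_sub _ _ b (((hcont.mul hid).mul hcont).sub (hcont.mul hid)) (by simp [apxf_zero])
        (hid.mul hcont) (by simp [apxf_zero])
    have e4 : cfcₙ (fun t => apxf n t * t * apxf n t - apxf n t * t - t * apxf n t + t) b
        = cfcₙ (fun t => apxf n t * t * apxf n t - apxf n t * t - t * apxf n t) b
          + cfcₙ (fun t : ℝ => t) b :=
      cfcₙ_add _ _ b ((((hcont.mul hid).mul hcont).sub (hcont.mul hid)).sub (hid.mul hcont))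
        (by simp [apxf_zero]) hid rfl
    have hsum : u * b * u - u * b - b * u + b
        = cfcₙ (fun t => apxf n t * t * apxf n t - apxf n t * t - t * apxf n t + t) b := by
      rw [e4, e5, e6, e3, e1, e2, cfcₙ_id' ℝ b]
    have hnorm : ‖u * b * u - u * b - b * u + b‖ ≤ 1 / ((n : ℝ) + 1) := by
      rw [hsum]
      refine norm_cfcₙ_le fun x _ => ?_
      rw [Real.norm_eq_abs]
      calc |apxf n x * x * apxf n x - apxf n x * x - x * apxf n x + x|
          = |x * (1 - apxf n x) ^ 2| := by ring_nf
        _ ≤ 1 / ((n : ℝ) + 1) := apxf_bound n x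
    have hsq : ‖a * u - a‖ * ‖a * u - a‖ ≤ 1 / ((n : ℝ) + 1) := by
      rw [← CStarRing.norm_star_mul_self, key1]
      exact hnorm
    calc ‖a * u - a‖ = Real.sqrt (‖a * u - a‖ * ‖a * u - a‖) :=
          (Real.sqrt_mul_self (norm_nonneg _)).symm
      _ ≤ Real.sqrt (1 / ((n : ℝ) + 1)) := Real.sqrt_le_sqrt hsq
  rw [tendsto_iff_norm_sub_tendsto_zero]
  have hsqrt : Tendsto (fun n : ℕ => Real.sqrt (1 / ((n : ℝ) + 1))) atTop (𝓝 0) := by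
    have h1 : Tendsto (fun n : ℕ => 1 / ((n : ℝ) + 1)) atTop (𝓝 0) :=
      tendsto_one_div_add_atTop_nhds_zero_nat
    have := (Real.continuous_sqrt.tendsto' 0 0 Real.sqrt_zero).comp h1
    exact this
  exact squeeze_zero (fun n => norm_nonneg _) key hsqrt

lemma apxf_cfcₙ_selfAdjoint (n : ℕ) (b : A) : IsSelfAdjoint (cfcₙ (apxf n) b) :=
  cfcₙ_predicate (apxf n) b

lemma approx_left (a : A) :
    Tendsto (fun n : ℕ => cfcₙ (apxf n) (a * star a) * a) atTop (𝓝 a) := by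
  have h := approx_right (star a)
  simp only [star_star] at h
  have h2 := (continuous_star.tendsto (star a)).comp h
  simp only [star_star] at h2
  refine h2.congr fun n => ?_
  simp only [Function.comp_apply]
  rw [star_mul, star_star, (apxf_cfcₙ_selfAdjoint n (a * star a)).star_eq]

end Aux
section Mem
open Filter Topology
variable {A : Type*} [NonUnitalCStarAlgebra A]

lemma cfcₙ_mem_of_closed {b : A} (hb : IsSelfAdjoint b) (T : Set A)
    (hclosed : IsClosed T) (h0T : (0 : A) ∈ T) (hbT : b ∈ T)
    (hadd : ∀ x ∈ T, ∀ y ∈ T, x + y ∈ T)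
    (hsmul : ∀ (r : ℝ), ∀ x ∈ T, r • x ∈ T)
    (hmul : ∀ x ∈ T, ∀ y ∈ T, x * y ∈ T)
    (g : ℝ → ℝ) (hg : ContinuousOn g (quasispectrum ℝ b)) (hg0 : g 0 = 0) :
    cfcₙ g b ∈ T := by
  rw [cfcₙ_apply g b hg hg0 hb]
  set φ : ContinuousMapZero (quasispectrum ℝ b) ℝ →⋆ₙₐ[ℝ] A := cfcₙHom hb with hφ
  suffices h : ∀ f : ContinuousMapZero (quasispectrum ℝ b) ℝ, φ f ∈ T from h _
  intro f
  have h0 : ((0 : quasispectrum ℝ b) : ℝ) = 0 := rfl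
  have hdense := ContinuousMapZero.adjoin_id_dense (𝕜 := ℝ) (quasispectrum ℝ b)
  have hsub : (NonUnitalStarAlgebra.adjoin ℝ
      {(ContinuousMapZero.id (quasispectrum ℝ b) : ContinuousMapZero (quasispectrum ℝ b) ℝ)} : Set _)
      ⊆ φ ⁻¹' T := by
    intro x hx
    induction hx using NonUnitalStarAlgebra.adjoin_induction with
    | mem x hx =>
      rw [Set.mem_singleton_iff] at hx
      subst hx
      have : φ (ContinuousMapZero.id (quasispectrum ℝ b)) = b := cfcₙHom_id hb
      simpa [this] using hbT
    | add x y hx hy ihx ihy => simpa [map_add] using hadd _ ihx _ ihy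
    | zero => simpa [map_zero] using h0T
    | mul x y hx hy ihx ihy => simpa [map_mul] using hmul _ ihx _ ihy
    | smul r x hx ihx => simpa [map_smul] using hsmul r _ ihx
    | star x hx ihx =>
      have : star x = x := by ext t; exact star_trivial _
      simpa [this] using ihx
  have hcl : IsClosed (φ ⁻¹' T) := hclosed.preimage (cfcₙHom_continuous hb)
  have : f ∈ closure (NonUnitalStarAlgebra.adjoin ℝ
      {(ContinuousMapZero.id (quasispectrum ℝ b) : ContinuousMapZero (quasispectrum ℝ b) ℝ)} : Set _) := by
    rw [hdense.closure_eq]; trivial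
  exact hcl.closure_subset_iff.mpr hsub this

end Mem

section Ideals
open Filter Topology
variable {A : Type*} [NonUnitalCStarAlgebra A]


lemma smul_mem_of_absorb {I : Set A} (hcl : IsClosed I)
    (habs : ∀ r : A, ∀ x ∈ I, r * x ∈ I) (c : ℂ) {x : A} (hx : x ∈ I) : c • x ∈ I := by
  have h : Tendsto (fun n : ℕ => c • (cfcₙ (apxf n) (x * star x) * x)) atTop (𝓝 (c • x)) :=
    (approx_left x).const_smul c
  refine hcl.mem_of_tendsto h (Eventually.of_forall fun n => ?_)
  rw [← smul_mul_assoc]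
  exact habs _ _ hx

lemma real_smul_eq_complex_smul (r : ℝ) (x : A) : r • x = ((r : ℂ)) • x := by
  rw [← smul_one_smul ℂ r x, Complex.real_smul, mul_one]

lemma smul_real_mem_of_absorb {I : Set A} (hcl : IsClosed I)
    (habs : ∀ r : A, ∀ x ∈ I, r * x ∈ I) (r : ℝ) {x : A} (hx : x ∈ I) : r • x ∈ I := by
  rw [real_smul_eq_complex_smul]
  exact smul_mem_of_absorb hcl habs _ hx

variable {I'' : Set A}

lemma star_mem_of_univIdeal (hI'' : IsClosedIdealIn Set.univ I'') {x : A}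
    (hx : x ∈ I'') : star x ∈ I'' := by
  obtain ⟨-, h0, hadd, hneg, habs, hcl⟩ := hI''
  have hxx : x * star x ∈ I'' := (habs (star x) (Set.mem_univ _) x hx).2
  have hu : ∀ n : ℕ, cfcₙ (apxf n) (x * star x) ∈ I'' := fun n =>
    cfcₙ_mem_of_closed (IsSelfAdjoint.mul_star_self x) I'' hcl h0 hxx hadd
      (fun r a ha => smul_real_mem_of_absorb hcl (fun r' a' ha' => (habs r' trivial a' ha').1) r ha)
      (fun a ha b hb => (habs a (Set.mem_univ _) b hb).1)
      (apxf n) (apxf_cont n).continuousOn (apxf_zero n)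
  have h := approx_right (star x)
  simp only [star_star] at h
  exact hcl.mem_of_tendsto h
    (Eventually.of_forall fun n => (habs (star x) (Set.mem_univ _) _ (hu n)).1)

/-- membership of `cfcₙ (apxf n)` in any closed ideal-like set containing the base point,
where smul-closure is supplied. -/
lemma cfcₙ_apxf_mem {T : Set A} {b : A} (hb : IsSelfAdjoint b)
    (hcl : IsClosed T) (h0 : (0 : A) ∈ T) (hbT : b ∈ T)
    (hadd : ∀ x ∈ T, ∀ y ∈ T, x + y ∈ T)
    (hsmul : ∀ (r : ℝ), ∀ x ∈ T, r • x ∈ T)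
    (hmul : ∀ x ∈ T, ∀ y ∈ T, x * y ∈ T) (n : ℕ) :
    cfcₙ (apxf n) b ∈ T :=
  cfcₙ_mem_of_closed hb T hcl h0 hbT hadd hsmul hmul (apxf n)
    (apxf_cont n).continuousOn (apxf_zero n)

lemma smul_mem_of_subIdeal (hI'' : IsClosedIdealIn Set.univ I'') {J : Set A}
    (hJ : IsClosedIdealIn I'' J) (r : ℝ) {x : A} (hx : x ∈ J) : r • x ∈ J := by
  obtain ⟨-, h0'', hadd'', hneg'', habs'', hcl''⟩ := hI''
  obtain ⟨hsub, h0, hadd, hneg, habs, hcl⟩ := hJ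
  have hxI : x ∈ I'' := hsub hx
  have hxx : x * star x ∈ I'' := (habs'' (star x) (Set.mem_univ _) x hxI).2
  have hu : ∀ n : ℕ, cfcₙ (apxf n) (x * star x) ∈ I'' := fun n =>
    cfcₙ_apxf_mem (IsSelfAdjoint.mul_star_self x) hcl'' h0'' hxx hadd''
      (fun r' a ha => smul_real_mem_of_absorb hcl''
        (fun r'' a' ha' => (habs'' r'' (Set.mem_univ _) a' ha').1) r' ha)
      (fun a ha b hb => (habs'' a (Set.mem_univ _) b hb).1) n
  rw [real_smul_eq_complex_smul]
  have h : Tendsto (fun n : ℕ => ((r : ℂ)) • (cfcₙ (apxf n) (x * star x) * x)) atTop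
      (𝓝 (((r : ℂ)) • x)) := (approx_left x).const_smul _
  refine hcl.mem_of_tendsto h (Eventually.of_forall fun n => ?_)
  rw [← smul_mul_assoc]
  refine (habs _ ?_ x hx).1
  rw [← real_smul_eq_complex_smul]
  exact smul_real_mem_of_absorb hcl'' (fun r'' a' ha' => (habs'' r'' (Set.mem_univ _) a' ha').1) r (hu n)

/-- KEY: a closed ideal of a closed ideal is a closed ideal of the whole algebra. -/
lemma univIdeal_of_subIdeal (hI'' : IsClosedIdealIn Set.univ I'') {J : Set A}
    (hJ : IsClosedIdealIn I'' J) : IsClosedIdealIn Set.univ J := by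
  have hsmulJ : ∀ (r : ℝ), ∀ x ∈ J, r • x ∈ J := fun r x hx =>
    smul_mem_of_subIdeal hI'' hJ r hx
  obtain ⟨hsub'', h0'', hadd'', hneg'', habs'', hcl''⟩ := hI''
  obtain ⟨hsub, h0, hadd, hneg, habs, hcl⟩ := hJ
  refine ⟨Set.subset_univ J, h0, hadd, hneg, fun r _ a ha => ⟨?_, ?_⟩, hcl⟩
  · -- r * a ∈ J
    have hstar : star a ∈ I'' := star_mem_of_univIdeal
      ⟨hsub'', h0'', hadd'', hneg'', habs'', hcl''⟩ (hsub ha)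
    have hb : star a * a ∈ J := (habs (star a) hstar a ha).1
    have hu : ∀ n : ℕ, cfcₙ (apxf n) (star a * a) ∈ J := fun n =>
      cfcₙ_apxf_mem (IsSelfAdjoint.star_mul_self a) hcl h0 hb hadd hsmulJ
        (fun x hx y hy => (habs x (hsub hx) y hy).1) n
    have h : Tendsto (fun n : ℕ => r * (a * cfcₙ (apxf n) (star a * a))) atTop
        (𝓝 (r * a)) := (approx_right a).const_mul r
    refine hcl.mem_of_tendsto h (Eventually.of_forall fun n => ?_)
    rw [← mul_assoc]
    exact (habs (r * a) ((habs'' r (Set.mem_univ r) a (hsub ha)).1) _ (hu n)).1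
  · -- a * r ∈ J
    have hstar : star a ∈ I'' := star_mem_of_univIdeal
      ⟨hsub'', h0'', hadd'', hneg'', habs'', hcl''⟩ (hsub ha)
    have hb : a * star a ∈ J := (habs (star a) hstar a ha).2
    have hu : ∀ n : ℕ, cfcₙ (apxf n) (a * star a) ∈ J := fun n =>
      cfcₙ_apxf_mem (IsSelfAdjoint.mul_star_self a) hcl h0 hb hadd hsmulJ
        (fun x hx y hy => (habs x (hsub hx) y hy).1) n
    have h : Tendsto (fun n : ℕ => (cfcₙ (apxf n) (a * star a) * a) * r) atTop
        (𝓝 (a * r)) := (approx_left a).mul_const r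
    refine hcl.mem_of_tendsto h (Eventually.of_forall fun n => ?_)
    rw [mul_assoc]
    exact (habs (a * r) ((habs'' r (Set.mem_univ r) a (hsub ha)).2) _ (hu n)).2

end Ideals

section Ideals2
open Filter Topology
variable {A : Type*} [NonUnitalCStarAlgebra A] {I'' : Set A}

lemma mem_of_mul_star_self_mem {I : Set A} (hI : IsClosedIdealIn Set.univ I)
    {c : A} (h : c * star c ∈ I) : c ∈ I := by
  obtain ⟨-, h0, hadd, hneg, habs, hcl⟩ := hI
  have hu : ∀ n : ℕ, cfcₙ (apxf n) (c * star c) ∈ I := fun n =>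
    cfcₙ_apxf_mem (IsSelfAdjoint.mul_star_self c) hcl h0 h hadd
      (fun r a ha => smul_real_mem_of_absorb hcl
        (fun r' a' ha' => (habs r' (Set.mem_univ _) a' ha').1) r ha)
      (fun a ha b hb => (habs a (Set.mem_univ _) b hb).1) n
  refine hcl.mem_of_tendsto (approx_left c) (Eventually.of_forall fun n => ?_)
  exact (habs c (Set.mem_univ _) _ (hu n)).2

lemma inter_subIdeal (hI'' : IsClosedIdealIn Set.univ I'') {I : Set A}
    (hI : IsClosedIdealIn Set.univ I) : IsClosedIdealIn I'' (I ∩ I'') := by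
  obtain ⟨-, h0'', hadd'', hneg'', habs'', hcl''⟩ := hI''
  obtain ⟨-, h0, hadd, hneg, habs, hcl⟩ := hI
  refine ⟨Set.inter_subset_right, ⟨h0, h0''⟩, ?_, ?_, ?_, hcl.inter hcl''⟩
  · rintro a ⟨ha1, ha2⟩ b ⟨hb1, hb2⟩; exact ⟨hadd a ha1 b hb1, hadd'' a ha2 b hb2⟩
  · rintro a ⟨ha1, ha2⟩; exact ⟨hneg a ha1, hneg'' a ha2⟩
  · rintro r hr a ⟨ha1, ha2⟩
    exact ⟨⟨(habs r (Set.mem_univ _) a ha1).1, (habs'' r (Set.mem_univ _) a ha2).1⟩,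
      ⟨(habs r (Set.mem_univ _) a ha1).2, (habs'' r (Set.mem_univ _) a ha2).2⟩⟩

lemma Q_univIdeal (hI'' : IsClosedIdealIn Set.univ I'') {P : Set A}
    (hP : IsClosedIdealIn I'' P) :
    IsClosedIdealIn Set.univ {a : A | ∀ b ∈ I'', a * b ∈ P} := by
  have hPA : IsClosedIdealIn Set.univ P := univIdeal_of_subIdeal hI'' hP
  obtain ⟨hsub'', h0'', hadd'', hneg'', habs'', hcl''⟩ := hI''
  obtain ⟨hsubP, h0P, haddP, hnegP, habsP, hclP⟩ := hPA
  refine ⟨Set.subset_univ _, ?_, ?_, ?_, ?_, ?_⟩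
  · intro b hb; simpa using h0P
  · intro a ha c hc b hb
    have := haddP _ (ha b hb) _ (hc b hb)
    simpa [add_mul] using this
  · intro a ha b hb
    have := hnegP _ (ha b hb)
    simpa [neg_mul] using this
  · intro r _ a ha
    constructor
    · intro b hb
      rw [mul_assoc]
      exact (habsP r (Set.mem_univ _) _ (ha b hb)).1
    · intro b hb
      rw [mul_assoc]
      exact ha _ ((habs'' r (Set.mem_univ _) b hb).1)
  · have heq : {a : A | ∀ b ∈ I'', a * b ∈ P} = ⋂ b ∈ I'', (fun a => a * b) ⁻¹' P := by
      ext a; simp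
    rw [heq]
    exact isClosed_biInter fun b _ => hclP.preimage (continuous_mul_right b)

lemma Q_inter (hI'' : IsClosedIdealIn Set.univ I'') {P : Set A}
    (hP : IsClosedIdealIn I'' P) :
    {a : A | ∀ b ∈ I'', a * b ∈ P} ∩ I'' = P := by
  apply Set.Subset.antisymm
  · rintro c ⟨hcQ, hcI⟩
    have hstar : star c ∈ I'' := star_mem_of_univIdeal hI'' hcI
    exact mem_of_mul_star_self_mem (univIdeal_of_subIdeal hI'' hP) (hcQ _ hstar)
  · intro p hp
    exact ⟨fun b hb => (hP.2.2.2.2.1 b hb p hp).2, hP.1 hp⟩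

lemma primeInter (hI'' : IsClosedIdealIn Set.univ I'') {I : Set A}
    (hI : IsPrimeIdealIn Set.univ I) (hn : ¬ I'' ⊆ I) :
    IsPrimeIdealIn I'' (I ∩ I'') := by
  refine ⟨inter_subIdeal hI'' hI.1, ?_, ?_⟩
  · intro h
    exact hn (h ▸ Set.inter_subset_left)
  · intro J₁ J₂ hJ₁ hJ₂ hsub
    have hJ₁' := univIdeal_of_subIdeal hI'' hJ₁
    have hJ₂' := univIdeal_of_subIdeal hI'' hJ₂
    rcases hI.2.2 J₁ J₂ hJ₁' hJ₂' (hsub.trans Set.inter_subset_left) with h | h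
    · exact Or.inl (Set.subset_inter h hJ₁.1)
    · exact Or.inr (Set.subset_inter h hJ₂.1)

lemma eq_Q_of_prime (hI'' : IsClosedIdealIn Set.univ I'') {I : Set A}
    (hI : IsPrimeIdealIn Set.univ I) (hn : ¬ I'' ⊆ I) :
    I = {a : A | ∀ b ∈ I'', a * b ∈ I ∩ I''} := by
  have hP : IsClosedIdealIn I'' (I ∩ I'') := inter_subIdeal hI'' hI.1
  have hQ : IsClosedIdealIn Set.univ {a : A | ∀ b ∈ I'', a * b ∈ I ∩ I''} :=
    Q_univIdeal hI'' hP
  apply Set.Subset.antisymm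
  · intro a ha b hb
    exact ⟨(hI.1.2.2.2.2.1 b (Set.mem_univ _) a ha).2,
      (hI''.2.2.2.2.1 a (Set.mem_univ _) b hb).1⟩
  · have hQI : {a : A | ∀ b ∈ I'', a * b ∈ I ∩ I''} ∩ I'' ⊆ I := by
      rintro c ⟨hcQ, hcI⟩
      have hstar : star c ∈ I'' := star_mem_of_univIdeal hI'' hcI
      exact mem_of_mul_star_self_mem hI.1 (hcQ _ hstar).1
    rcases hI.2.2 _ I'' hQ hI'' hQI with h | h
    · exact h
    · exact absurd h hn

lemma Q_spec (hI'' : IsClosedIdealIn Set.univ I'') {P : Set A}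
    (hP : IsPrimeIdealIn I'' P) :
    (IsPrimeIdealIn Set.univ {a : A | ∀ b ∈ I'', a * b ∈ P} ∧
      ¬ I'' ⊆ {a : A | ∀ b ∈ I'', a * b ∈ P}) ∧
    {a : A | ∀ b ∈ I'', a * b ∈ P} ∩ I'' = P := by
  have hQ := Q_univIdeal hI'' hP.1
  have hQP := Q_inter hI'' hP.1
  have hns : ¬ I'' ⊆ {a : A | ∀ b ∈ I'', a * b ∈ P} := by
    intro h
    refine hP.2.1 ?_
    rw [← hQP, Set.inter_eq_right.mpr h]
  refine ⟨⟨⟨hQ, ?_, ?_⟩, hns⟩, hQP⟩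
  · intro h
    exact hns (h ▸ Set.subset_univ I'')
  · intro I₁ I₂ h1 h2 hsub
    have k1 : IsClosedIdealIn I'' (I₁ ∩ I'') := inter_subIdeal hI'' h1
    have k2 : IsClosedIdealIn I'' (I₂ ∩ I'') := inter_subIdeal hI'' h2
    have hsub' : (I₁ ∩ I'') ∩ (I₂ ∩ I'') ⊆ P := by
      rw [← hQP]
      rintro x ⟨⟨hx1, hxI⟩, ⟨hx2, -⟩⟩
      exact ⟨hsub ⟨hx1, hx2⟩, hxI⟩
    rcases hP.2.2 _ _ k1 k2 hsub' with h | h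
    · refine Or.inl fun a ha b hb => h ⟨(h1.2.2.2.2.1 b (Set.mem_univ _) a ha).2,
        (hI''.2.2.2.2.1 a (Set.mem_univ _) b hb).1⟩
    · refine Or.inr fun a ha b hb => h ⟨(h2.2.2.2.2.1 b (Set.mem_univ _) a ha).2,
        (hI''.2.2.2.2.1 a (Set.mem_univ _) b hb).1⟩

end Ideals2


/-- for a closed two-sided ideal `I''` of a C*-algebra `A`, the map
`I ↦ I ∩ I''` is a bijection from the prime ideals `I` of `A` with `I'' ⊄ I`
onto the prime ideals of the C*-algebra `I''`; its inverse sends a prime ideal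
`P` of `I''` to `{a ∈ A : ab ∈ P for all b ∈ I''}`. -/
theorem stmt9 {A : Type*} [NonUnitalNormedRing A] [StarRing A] [CStarRing A]
    [NormedSpace ℂ A] [IsScalarTower ℂ A A] [SMulCommClass ℂ A A] [StarModule ℂ A]
    [CompleteSpace A]
    (I'' : Set A) (hI'' : IsClosedIdealIn Set.univ I'') :
    Set.BijOn (fun I : Set A => I ∩ I'')
      {I | IsPrimeIdealIn Set.univ I ∧ ¬ I'' ⊆ I}
      {P | IsPrimeIdealIn I'' P} ∧
    ∀ P, IsPrimeIdealIn I'' P →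
      ∀ I, (IsPrimeIdealIn Set.univ I ∧ ¬ I'' ⊆ I) → I ∩ I'' = P →
        I = {a : A | ∀ b ∈ I'', a * b ∈ P} := by
  letI : NonUnitalCStarAlgebra A :=
    { ‹NonUnitalNormedRing A›, ‹StarRing A›, ‹CStarRing A›, ‹NormedSpace ℂ A›,
      ‹CompleteSpace A›, ‹IsScalarTower ℂ A A›, ‹SMulCommClass ℂ A A›, ‹StarModule ℂ A› with }
  constructor
  · refine ⟨?_, ?_, ?_⟩
    · rintro I ⟨hI, hn⟩
      exact primeInter hI'' hI hn
    · rintro I₁ ⟨h1, hn1⟩ I₂ ⟨h2, hn2⟩ heq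
      simp only at heq
      rw [eq_Q_of_prime hI'' h1 hn1, eq_Q_of_prime hI'' h2 hn2, heq]
    · rintro P hP
      obtain ⟨⟨hQp, hQn⟩, hQP⟩ := Q_spec hI'' hP
      exact ⟨_, ⟨hQp, hQn⟩, hQP⟩
  · rintro P hP I ⟨hI, hn⟩ hIP
    have h := eq_Q_of_prime hI'' hI hn
    rw [hIP] at h
    exact h
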